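/- Let \varphi be an analytic self-map of the unit disk with \varphi \in S^p. Then D_\varphi : S^p \to S^p is bounded if and only if C_\varphi : H^p \to S^p is bounded, and each is equivalent to the boundedness of the operator f \mapsto (f\circ\varphi)' from H^p to H^p. -/

import Mathlib

open Metric Complex

/-- The `p`-th power mean of `|g|^p` on the circle of radius `r`. -/
noncomputable def hpInt (p : ℝ) (g : ℂ → ℂ) (r : ℝ) : ℝ :=
  ∫ θ in (0 : ℝ)..(2 * Real.pi), ‖g (r * Complex.exp (θ * Complex.I))‖ ^ p / (2 * Real.pi)

/-- Membership in the Hardy space `H^p`. -/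
def MemHp (p : ℝ) (g : ℂ → ℂ) : Prop :=
  DifferentiableOn ℂ g (ball 0 1) ∧ BddAbove (hpInt p g '' Set.Ioo (0 : ℝ) 1)

/-- The `H^p` norm. -/
noncomputable def hpNorm (p : ℝ) (g : ℂ → ℂ) : ℝ :=
  (sSup (hpInt p g '' Set.Ioo (0 : ℝ) 1)) ^ (1 / p)

/-- Membership in `S^p`: `f` analytic on the disk with `f' ∈ H^p`. -/
def MemSp (p : ℝ) (f : ℂ → ℂ) : Prop :=
  DifferentiableOn ℂ f (ball 0 1) ∧ MemHp p (deriv f)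

/-- The `S^p` norm `‖f‖ = |f(0)| + ‖f'‖_{H^p}`. -/
noncomputable def spNorm (p : ℝ) (f : ℂ → ℂ) : ℝ :=
  ‖f 0‖ + hpNorm p (deriv f)

/-- Boundedness of an operator between two such spaces of functions. -/
def BddOp (memX : (ℂ → ℂ) → Prop) (nX : (ℂ → ℂ) → ℝ)
    (memY : (ℂ → ℂ) → Prop) (nY : (ℂ → ℂ) → ℝ) (T : (ℂ → ℂ) → (ℂ → ℂ)) : Prop :=
  (∀ f, memX f → memY (T f)) ∧ ∃ C : ℝ, ∀ f, memX f → nY (T f) ≤ C * nX f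

lemma circle_pt_norm (r θ : ℝ) : ‖(r : ℂ) * Complex.exp (θ * Complex.I)‖ = |r| := by
  simp [map_mul, Complex.norm_exp]

lemma circle_pt_mem {r : ℝ} (hr0 : 0 < r) (hr1 : r < 1) (θ : ℝ) :
    (r : ℂ) * Complex.exp (θ * Complex.I) ∈ ball (0 : ℂ) 1 := by
  rw [mem_ball_zero_iff, circle_pt_norm, abs_of_pos hr0]; exact hr1

lemma hpInt_nonneg (p : ℝ) (g : ℂ → ℂ) (r : ℝ) : 0 ≤ hpInt p g r := by
  apply intervalIntegral.integral_nonneg Real.two_pi_pos.le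
  intro θ _
  exact div_nonneg (Real.rpow_nonneg (norm_nonneg (g ((r:ℂ) * Complex.exp (θ * Complex.I)))) p) Real.two_pi_pos.le

lemma hpInt_congr {p : ℝ} {g h : ℂ → ℂ} (hgh : Set.EqOn g h (ball 0 1)) {r : ℝ}
    (hr : r ∈ Set.Ioo (0 : ℝ) 1) : hpInt p g r = hpInt p h r := by
  unfold hpInt
  congr 1
  funext θ
  rw [hgh (circle_pt_mem hr.1 hr.2 θ)]

lemma hpNorm_nonneg (p : ℝ) (g : ℂ → ℂ) : 0 ≤ hpNorm p g := by
  apply Real.rpow_nonneg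
  apply Real.sSup_nonneg
  rintro x ⟨r, -, rfl⟩
  exact hpInt_nonneg p g r

lemma hpImg_congr {p : ℝ} {g h : ℂ → ℂ} (hgh : Set.EqOn g h (ball 0 1)) :
    hpInt p g '' Set.Ioo (0:ℝ) 1 = hpInt p h '' Set.Ioo (0:ℝ) 1 :=
  Set.image_congr fun _ hr => hpInt_congr hgh hr

lemma hpNorm_congr {p : ℝ} {g h : ℂ → ℂ} (hgh : Set.EqOn g h (ball 0 1)) :
    hpNorm p g = hpNorm p h := by
  unfold hpNorm; rw [hpImg_congr hgh]

lemma memHp_congr {p : ℝ} {g h : ℂ → ℂ} (hgh : Set.EqOn g h (ball 0 1)) :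
    MemHp p g ↔ MemHp p h := by
  unfold MemHp
  rw [hpImg_congr hgh]
  constructor <;> rintro ⟨hd, hb⟩
  · exact ⟨hd.congr hgh.symm, hb⟩
  · exact ⟨hd.congr hgh, hb⟩

lemma derivEqOn {f g : ℂ → ℂ} (h : Set.EqOn f g (ball 0 1)) :
    Set.EqOn (deriv f) (deriv g) (ball 0 1) := fun z hz =>
  Filter.EventuallyEq.deriv_eq (Filter.eventuallyEq_of_mem (isOpen_ball.mem_nhds hz) h)

lemma cauchy_est {g : ℂ → ℂ} {w : ℂ} {r : ℝ} (hg : DifferentiableOn ℂ g (ball 0 1))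
    (hr0 : 0 < r) (hr1 : r < 1) (hw : ‖w‖ < r) :
    2 * Real.pi * ‖g w‖ ≤
      (r / (r - ‖w‖)) * ∫ θ in (0:ℝ)..(2*Real.pi), ‖g (r * Complex.exp (θ * Complex.I))‖ := by
  have hsub : closedBall (0:ℂ) r ⊆ ball 0 1 := closedBall_subset_ball hr1
  have hd : DiffContOnCl ℂ g (ball 0 r) := by
    apply DifferentiableOn.diffContOnCl
    rw [closure_ball (0:ℂ) hr0.ne']
    exact hg.mono hsub
  have hwmem : w ∈ ball (0:ℂ) r := mem_ball_zero_iff.mpr hw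
  have key := hd.circleIntegral_sub_inv_smul hwmem
  have hns : r - ‖w‖ > 0 := sub_pos.mpr hw
  -- circle map facts
  have hcm : ∀ θ : ℝ, circleMap 0 r θ = (r : ℂ) * Complex.exp (θ * Complex.I) := by
    intro θ; simp [circleMap]
  have hcm_norm : ∀ θ : ℝ, ‖circleMap 0 r θ‖ = r := by
    intro θ; rw [hcm, circle_pt_norm, abs_of_pos hr0]
  have hne : ∀ θ : ℝ, circleMap 0 r θ - w ≠ 0 := by
    intro θ hzero
    rw [sub_eq_zero] at hzero
    rw [← hzero, hcm_norm] at hw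
    exact lt_irrefl _ hw
  have hgc : Continuous fun θ : ℝ => g (circleMap 0 r θ) := by
    apply (hg.continuousOn).comp_continuous (continuous_circleMap 0 r)
    intro θ
    rw [mem_ball_zero_iff, hcm_norm]; exact hr1
  have hcont1 : Continuous fun θ : ℝ =>
      ‖deriv (circleMap 0 r) θ • ((circleMap 0 r θ - w)⁻¹ • g (circleMap 0 r θ))‖ := by
    apply Continuous.norm
    apply Continuous.fun_smul
    · have hderiv : deriv (circleMap 0 r) = fun θ => circleMap 0 r θ * Complex.I :=
        funext fun θ => deriv_circleMap 0 r θ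
      rw [hderiv]
      exact (continuous_circleMap 0 r).mul continuous_const
    · exact (((continuous_circleMap 0 r).sub continuous_const).inv₀ hne).smul hgc
  have hcont2 : Continuous fun θ : ℝ =>
      (r / (r - ‖w‖)) * ‖g (circleMap 0 r θ)‖ := continuous_const.mul hgc.norm
  have hptwise : ∀ θ ∈ Set.Icc (0:ℝ) (2*Real.pi),
      ‖deriv (circleMap 0 r) θ • ((circleMap 0 r θ - w)⁻¹ • g (circleMap 0 r θ))‖ ≤
      (r / (r - ‖w‖)) * ‖g (circleMap 0 r θ)‖ := by
    intro θ _
    rw [norm_smul, norm_smul, norm_inv]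
    have h1 : ‖deriv (circleMap 0 r) θ‖ = r := by
      rw [deriv_circleMap]
      rw [norm_mul, Complex.norm_I, mul_one, hcm_norm]
    rw [h1]
    have h2 : r - ‖w‖ ≤ ‖circleMap 0 r θ - w‖ := by
      have := norm_sub_norm_le (circleMap 0 r θ) w
      rw [hcm_norm] at this; exact this
    have h3 : ‖circleMap 0 r θ - w‖⁻¹ ≤ (r - ‖w‖)⁻¹ := by
      exact inv_anti₀ hns h2
    rw [div_eq_mul_inv, mul_assoc]
    gcongr
  have hbound : ‖∮ z in C(0, r), (z - w)⁻¹ • g z‖ ≤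
      (r / (r - ‖w‖)) * ∫ θ in (0:ℝ)..(2*Real.pi), ‖g (circleMap 0 r θ)‖ := by
    calc ‖∮ z in C(0, r), (z - w)⁻¹ • g z‖
        ≤ ∫ θ in (0:ℝ)..(2*Real.pi),
            ‖deriv (circleMap 0 r) θ • ((circleMap 0 r θ - w)⁻¹ • g (circleMap 0 r θ))‖ :=
          intervalIntegral.norm_integral_le_integral_norm Real.two_pi_pos.le
      _ ≤ ∫ θ in (0:ℝ)..(2*Real.pi), (r / (r - ‖w‖)) * ‖g (circleMap 0 r θ)‖ :=
          intervalIntegral.integral_mono_on Real.two_pi_pos.le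
            (hcont1.intervalIntegrable _ _) (hcont2.intervalIntegrable _ _) hptwise
      _ = (r / (r - ‖w‖)) * ∫ θ in (0:ℝ)..(2*Real.pi), ‖g (circleMap 0 r θ)‖ :=
          intervalIntegral.integral_const_mul _ _
  have hnorm : ‖(2 * (Real.pi:ℂ) * Complex.I) • g w‖ = 2 * Real.pi * ‖g w‖ := by
    rw [norm_smul, norm_mul, norm_mul, Complex.norm_I, mul_one, Complex.norm_real,
      Real.norm_eq_abs, abs_of_pos Real.pi_pos]
    norm_num
  rw [← hnorm, ← key]
  simp only [← hcm]
  exact hbound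

lemma point_eval (p : ℝ) (hp : 1 < p) {w : ℂ} (hw : w ∈ ball (0:ℂ) 1) :
    ∃ K : ℝ, 0 ≤ K ∧ ∀ g, MemHp p g → ‖g w‖ ≤ K * hpNorm p g := by
  rw [mem_ball_zero_iff] at hw
  set s : ℝ := ‖w‖ with hs
  have hs0 : 0 ≤ s := norm_nonneg w
  set r : ℝ := (s + 1) / 2 with hrdef
  have hsr : s < r := by rw [hrdef]; linarith
  have hr0 : 0 < r := lt_of_le_of_lt hs0 hsr
  have hr1 : r < 1 := by rw [hrdef]; linarith
  set A : ℝ := r / (r - s) with hAdef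
  have hA0 : 0 < A := div_pos hr0 (by linarith)
  have hp0 : (0:ℝ) < p := by linarith
  have hp_ne : p ≠ 0 := hp0.ne'
  refine ⟨2 * A, by positivity, ?_⟩
  rintro g ⟨hgd, hgb⟩
  set M : ℝ := sSup (hpInt p g '' Set.Ioo (0:ℝ) 1) with hMdef
  have hM0 : 0 ≤ M := Real.sSup_nonneg (by rintro x ⟨r', -, rfl⟩; exact hpInt_nonneg p g r')
  have hMr : hpInt p g r ≤ M := le_csSup hgb ⟨r, ⟨hr0, hr1⟩, rfl⟩
  have hnorm_eq : hpNorm p g = M ^ (1/p) := rfl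
  -- continuity on the circle
  have hcirc : Continuous fun θ : ℝ => (r:ℂ) * Complex.exp (θ * Complex.I) :=
    continuous_const.mul (Complex.continuous_exp.comp
      (Complex.continuous_ofReal.mul continuous_const))
  have hgc : Continuous fun θ : ℝ => ‖g ((r:ℂ) * Complex.exp (θ * Complex.I))‖ :=
    ((hgd.continuousOn).comp_continuous hcirc fun θ => circle_pt_mem hr0 hr1 θ).norm
  have hgcp : Continuous fun θ : ℝ => ‖g ((r:ℂ) * Complex.exp (θ * Complex.I))‖ ^ p :=
    hgc.rpow_const fun θ => Or.inr hp0.le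
  -- the basic Cauchy estimate
  have hI := cauchy_est hgd hr0 hr1 hsr
  -- the scaling inequality
  have main : ∀ t : ℝ, 0 < t → t * ‖g w‖ ≤ A * (1 + t ^ p * M) := by
    intro t ht
    have step1 : t * (2 * Real.pi * ‖g w‖) ≤
        A * ∫ θ in (0:ℝ)..(2*Real.pi), t * ‖g ((r:ℂ) * Complex.exp (θ * Complex.I))‖ := by
      rw [intervalIntegral.integral_const_mul]
      calc t * (2 * Real.pi * ‖g w‖) ≤ t * (A * ∫ θ in (0:ℝ)..(2*Real.pi),
            ‖g ((r:ℂ) * Complex.exp (θ * Complex.I))‖) := by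
            exact mul_le_mul_of_nonneg_left hI ht.le
        _ = A * (t * ∫ θ in (0:ℝ)..(2*Real.pi),
            ‖g ((r:ℂ) * Complex.exp (θ * Complex.I))‖) := by ring
    have step2 : (∫ θ in (0:ℝ)..(2*Real.pi), t * ‖g ((r:ℂ) * Complex.exp (θ * Complex.I))‖)
        ≤ ∫ θ in (0:ℝ)..(2*Real.pi),
          (1 + t ^ p * ‖g ((r:ℂ) * Complex.exp (θ * Complex.I))‖ ^ p) := by
      apply intervalIntegral.integral_mono_on Real.two_pi_pos.le
      · exact (continuous_const.mul hgc).intervalIntegrable _ _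
      · exact (continuous_const.add (continuous_const.mul hgcp)).intervalIntegrable _ _
      · intro θ _
        set b : ℝ := ‖g ((r:ℂ) * Complex.exp (θ * Complex.I))‖ with hbdef
        have hb0 : 0 ≤ b := norm_nonneg _
        have key : t * b ≤ 1 + (t * b) ^ p := by
          rcases le_or_gt (t * b) 1 with h | h
          · have : (0:ℝ) ≤ (t*b) ^ p := Real.rpow_nonneg (by positivity) p
            linarith
          · have h4 : t * b ≤ (t * b) ^ p := by
              nth_rewrite 1 [← Real.rpow_one (t*b)]
              exact Real.rpow_le_rpow_of_exponent_le h.le hp.le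
            linarith
        have hmul : (t * b) ^ p = t ^ p * b ^ p := Real.mul_rpow ht.le hb0
        rw [hmul] at key
        exact key
    have step3 : (∫ θ in (0:ℝ)..(2*Real.pi),
          (1 + t ^ p * ‖g ((r:ℂ) * Complex.exp (θ * Complex.I))‖ ^ p))
        = 2 * Real.pi + t ^ p * (2 * Real.pi * hpInt p g r) := by
      rw [intervalIntegral.integral_add (intervalIntegrable_const)
        ((continuous_const.fun_mul hgcp).intervalIntegrable _ _),
        intervalIntegral.integral_const_mul, intervalIntegral.integral_const]
      have : hpInt p g r = (∫ θ in (0:ℝ)..(2*Real.pi),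
          ‖g ((r:ℂ) * Complex.exp (θ * Complex.I))‖ ^ p) / (2 * Real.pi) := by
        unfold hpInt
        rw [intervalIntegral.integral_div]
      rw [this]
      have h2pi : (2 * Real.pi) ≠ 0 := Real.two_pi_pos.ne'
      field_simp
      simp only [sub_zero, smul_eq_mul, mul_one, mul_comm I]
    have chain : t * (2 * Real.pi * ‖g w‖) ≤
        A * (2 * Real.pi + t ^ p * (2 * Real.pi * M)) := by
      calc t * (2 * Real.pi * ‖g w‖)
          ≤ A * ∫ θ in (0:ℝ)..(2*Real.pi), t * ‖g ((r:ℂ) * Complex.exp (θ * Complex.I))‖ :=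
            step1
        _ ≤ A * ∫ θ in (0:ℝ)..(2*Real.pi),
              (1 + t ^ p * ‖g ((r:ℂ) * Complex.exp (θ * Complex.I))‖ ^ p) :=
            mul_le_mul_of_nonneg_left step2 hA0.le
        _ = A * (2 * Real.pi + t ^ p * (2 * Real.pi * hpInt p g r)) := by rw [step3]
        _ ≤ A * (2 * Real.pi + t ^ p * (2 * Real.pi * M)) := by
            have htp : (0:ℝ) ≤ t ^ p := Real.rpow_nonneg ht.le p
            have hstep : t ^ p * (2 * Real.pi * hpInt p g r) ≤ t ^ p * (2 * Real.pi * M) :=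
              mul_le_mul_of_nonneg_left
                (mul_le_mul_of_nonneg_left hMr Real.two_pi_pos.le) htp
            have := mul_le_mul_of_nonneg_left hstep hA0.le
            nlinarith
    have h2pi : (0:ℝ) < 2 * Real.pi := Real.two_pi_pos
    apply le_of_mul_le_mul_left _ h2pi
    calc 2 * Real.pi * (t * ‖g w‖) = t * (2 * Real.pi * ‖g w‖) := by ring
      _ ≤ A * (2 * Real.pi + t ^ p * (2 * Real.pi * M)) := chain
      _ = 2 * Real.pi * (A * (1 + t ^ p * M)) := by ring
  rcases eq_or_lt_of_le hM0 with hM | hM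
  · -- M = 0
    rw [hnorm_eq, ← hM, Real.zero_rpow (one_div_ne_zero hp_ne), mul_zero]
    by_contra hcon
    push_neg at hcon
    have ha : 0 < ‖g w‖ := hcon
    have htpos : 0 < 2 * A / ‖g w‖ := by positivity
    have hmain := main _ htpos
    rw [← hM, mul_zero, add_zero, mul_one] at hmain
    rw [div_mul_cancel₀ _ ha.ne'] at hmain
    linarith
  · -- M > 0
    set t : ℝ := M ^ (-(1/p)) with htdef
    have ht : 0 < t := Real.rpow_pos_of_pos hM _
    have htp : t ^ p = M⁻¹ := by
      rw [htdef, ← Real.rpow_mul hM0 (-(1/p)) p]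
      rw [show (-(1/p)) * p = -1 by field_simp]
      exact Real.rpow_neg_one M
    have h1 := main t ht
    rw [htp, inv_mul_cancel₀ hM.ne'] at h1
    have h2 : t * ‖g w‖ ≤ 2 * A := by linarith
    have ht_inv : t⁻¹ = M ^ (1/p) := by
      rw [htdef, Real.rpow_neg hM0, inv_inv]
    have h3 : ‖g w‖ ≤ 2 * A * t⁻¹ := by
      calc ‖g w‖ = t⁻¹ * (t * ‖g w‖) := by field_simp
        _ ≤ t⁻¹ * (2 * A) := mul_le_mul_of_nonneg_left h2 (inv_nonneg.mpr ht.le)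
        _ = 2 * A * t⁻¹ := mul_comm _ _
    rw [hnorm_eq, ← ht_inv]
    exact h3

lemma exists_primitive {g : ℂ → ℂ} (hg : DifferentiableOn ℂ g (ball 0 1)) :
    ∃ F : ℂ → ℂ, F 0 = 0 ∧ ∀ z ∈ ball (0:ℂ) 1, HasDerivAt F (g z) z := by
  set a : ℕ → ℂ := fun n => (Nat.factorial n : ℂ)⁻¹ * iteratedDeriv n g 0 with hadef
  have hTaylor : ∀ z ∈ ball (0:ℂ) 1, HasSum (fun n => a n * z ^ n) (g z) := by
    intro z hz
    have h := Complex.hasSum_taylorSeries_on_ball hg hz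
    convert h using 2 with n
    case e'_3 => rfl
    rw [hadef]
    simp only [sub_zero, smul_eq_mul]
    ring
  refine ⟨fun z => ∑' n, a n * ((n:ℂ) + 1)⁻¹ * z ^ (n + 1), by simp, ?_⟩
  intro z₀ hz₀
  rw [mem_ball_zero_iff] at hz₀
  set s : ℝ := ‖z₀‖ with hsdef
  have hs0 : 0 ≤ s := norm_nonneg z₀
  set r : ℝ := (s + 1) / 2 with hrdef
  set r' : ℝ := (r + 1) / 2 with hr'def
  have hsr : s < r := by rw [hrdef]; linarith
  have hr0 : 0 < r := lt_of_le_of_lt hs0 hsr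
  have hrr' : r < r' := by rw [hr'def, hrdef]; linarith
  have hr'1 : r' < 1 := by rw [hr'def, hrdef]; linarith
  have hr'0 : 0 < r' := hr0.trans hrr'
  have hmem' : ((r' : ℝ) : ℂ) ∈ ball (0:ℂ) 1 := by
    rw [mem_ball_zero_iff, Complex.norm_real, Real.norm_eq_abs, abs_of_pos hr'0]
    exact hr'1
  have hsum' := hTaylor _ hmem'
  have htend : Filter.Tendsto (fun n => ‖a n‖ * r' ^ n) Filter.atTop (nhds 0) := by
    have h1 := hsum'.summable.tendsto_atTop_zero
    have h2 := h1.norm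
    rw [norm_zero] at h2
    refine h2.congr fun n => ?_
    rw [norm_mul, norm_pow, Complex.norm_real, Real.norm_eq_abs, abs_of_pos hr'0]
  obtain ⟨C, hC⟩ := htend.bddAbove_range
  have hCle : ∀ n, ‖a n‖ * r' ^ n ≤ C := fun n => hC (Set.mem_range_self n)
  have hC0 : 0 ≤ C := le_trans (by positivity) (hCle 0)
  have hratio : r / r' < 1 := (div_lt_one hr'0).mpr hrr'
  have hratio0 : 0 ≤ r / r' := by positivity
  have hu : Summable (fun n => C * (r / r') ^ n) :=
    (summable_geometric_of_lt_one hratio0 hratio).mul_left C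
  have hz₀r : z₀ ∈ ball (0:ℂ) r := by rw [mem_ball_zero_iff]; exact hsr
  have key := hasDerivAt_tsum_of_isPreconnected hu (isOpen_ball)
    ((convex_ball (0:ℂ) r).isPreconnected)
    (g := fun n z => a n * ((n:ℂ) + 1)⁻¹ * z ^ (n + 1))
    (g' := fun n z => a n * z ^ n)
    (y₀ := 0) (y := z₀)
    ?_ ?_ (mem_ball_self hr0) ?_ hz₀r
  · have heq := (hTaylor z₀ (mem_ball_zero_iff.mpr hz₀)).tsum_eq
    rw [heq] at key
    exact key
  · intro n y _
    have h1 : HasDerivAt (fun z : ℂ => z ^ (n + 1)) (((n:ℂ) + 1) * y ^ n) y := by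
      have := hasDerivAt_pow (n + 1) y
      simpa using this
    have h2 := h1.const_mul (a n * ((n:ℂ) + 1)⁻¹)
    convert h2 using 1
    case e'_4 => rfl
    have hne : ((n:ℂ) + 1) ≠ 0 := by
      have h5 : ((n + 1 : ℕ) : ℂ) ≠ 0 := Nat.cast_ne_zero.mpr (Nat.succ_ne_zero n)
      simpa using h5
    rw [mul_assoc (a n), inv_mul_cancel_left₀ hne]
  · intro n y hy
    rw [mem_ball_zero_iff] at hy
    have h1 : ‖a n * y ^ n‖ = ‖a n‖ * ‖y‖ ^ n := by rw [norm_mul, norm_pow]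
    rw [h1]
    have h2 : ‖y‖ ^ n ≤ r ^ n := pow_le_pow_left₀ (norm_nonneg y) hy.le n
    have h3 : ‖a n‖ * ‖y‖ ^ n ≤ ‖a n‖ * r ^ n :=
      mul_le_mul_of_nonneg_left h2 (norm_nonneg _)
    have hcancel : (r / r') ^ n * r' ^ n = r ^ n := by
      rw [div_pow, div_mul_cancel₀]
      exact pow_ne_zero n hr'0.ne'
    have h4 : ‖a n‖ * r ^ n = (‖a n‖ * r' ^ n) * (r / r') ^ n := by
      rw [← hcancel]; ring
    have h5 : (‖a n‖ * r' ^ n) * (r / r') ^ n ≤ C * (r / r') ^ n :=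
      mul_le_mul_of_nonneg_right (hCle n) (by positivity)
    calc ‖a n‖ * ‖y‖ ^ n ≤ ‖a n‖ * r ^ n := h3
      _ = (‖a n‖ * r' ^ n) * (r / r') ^ n := h4
      _ ≤ C * (r / r') ^ n := h5
  · simpa using summable_zero

lemma spNorm_congr {p : ℝ} {f g : ℂ → ℂ} (h : Set.EqOn f g (ball 0 1)) :
    spNorm p f = spNorm p g := by
  unfold spNorm
  rw [h (mem_ball_self one_pos), hpNorm_congr (derivEqOn h)]

lemma memSp_congr {p : ℝ} {f g : ℂ → ℂ} (h : Set.EqOn f g (ball 0 1)) :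
    MemSp p f ↔ MemSp p g := by
  unfold MemSp
  rw [memHp_congr (derivEqOn h)]
  constructor <;> rintro ⟨d, b⟩
  · exact ⟨d.congr h.symm, b⟩
  · exact ⟨d.congr h, b⟩

lemma hpNorm_le_spNorm (p : ℝ) (f : ℂ → ℂ) : hpNorm p (deriv f) ≤ spNorm p f :=
  le_add_of_nonneg_left (norm_nonneg _)

/-- For an analytic self-map `φ` of the disk with `φ ∈ S^p`: `D_φ : S^p → S^p` is bounded
iff `C_φ : H^p → S^p` is bounded, and each is equivalent to boundedness of
`f ↦ (f ∘ φ)'` from `H^p` to `H^p`. -/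
theorem stmt3 (p : ℝ) (hp : 1 < p) (φ : ℂ → ℂ)
    (hφan : DifferentiableOn ℂ φ (ball 0 1))
    (hφmap : Set.MapsTo φ (ball 0 1) (ball 0 1))
    (hφSp : MemSp p φ) :
    (BddOp (MemSp p) (spNorm p) (MemSp p) (spNorm p) (fun f => fun z => deriv f (φ z)) ↔
      BddOp (MemHp p) (hpNorm p) (MemSp p) (spNorm p) (fun f => f ∘ φ)) ∧
    (BddOp (MemSp p) (spNorm p) (MemSp p) (spNorm p) (fun f => fun z => deriv f (φ z)) ↔
      BddOp (MemHp p) (hpNorm p) (MemHp p) (hpNorm p) (fun f => deriv (f ∘ φ))) := by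
  have h0mem : (0:ℂ) ∈ ball (0:ℂ) 1 := mem_ball_self one_pos
  have hφ0 : φ 0 ∈ ball (0:ℂ) 1 := hφmap h0mem
  have h12 : BddOp (MemSp p) (spNorm p) (MemSp p) (spNorm p) (fun f => fun z => deriv f (φ z)) →
      BddOp (MemHp p) (hpNorm p) (MemSp p) (spNorm p) (fun f => f ∘ φ) := by
    rintro ⟨hmap, C, hC⟩
    have key : ∀ g, MemHp p g → MemSp p (g ∘ φ) ∧ spNorm p (g ∘ φ) ≤ C * hpNorm p g := by
      intro g hg
      obtain ⟨F, hF0, hF⟩ := exists_primitive hg.1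
      have hFd : DifferentiableOn ℂ F (ball 0 1) := fun z hz =>
        (hF z hz).differentiableAt.differentiableWithinAt
      have hFderiv : Set.EqOn (deriv F) g (ball 0 1) := fun z hz => (hF z hz).deriv
      have hFSp : MemSp p F := ⟨hFd, (memHp_congr hFderiv).mpr hg⟩
      have hDmem := hmap F hFSp
      have hDb := hC F hFSp
      have hEq : Set.EqOn (fun z => deriv F (φ z)) (g ∘ φ) (ball 0 1) := fun z hz => by
        simp only [Function.comp]
        exact hFderiv (hφmap hz)
      have hmem2 : MemSp p (g ∘ φ) := (memSp_congr hEq).mp hDmem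
      have hsp : spNorm p F = hpNorm p g := by
        rw [show spNorm p F = ‖F 0‖ + hpNorm p (deriv F) from rfl, hF0, norm_zero, zero_add,
          hpNorm_congr hFderiv]
      refine ⟨hmem2, ?_⟩
      calc spNorm p (g ∘ φ) = spNorm p (fun z => deriv F (φ z)) := (spNorm_congr hEq).symm
        _ ≤ C * spNorm p F := hDb
        _ = C * hpNorm p g := by rw [hsp]
    exact ⟨fun g hg => (key g hg).1, C, fun g hg => (key g hg).2⟩
  have h21 : BddOp (MemHp p) (hpNorm p) (MemSp p) (spNorm p) (fun f => f ∘ φ) →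
      BddOp (MemSp p) (spNorm p) (MemSp p) (spNorm p) (fun f => fun z => deriv f (φ z)) := by
    rintro ⟨hmap, C, hC⟩
    refine ⟨fun f hf => hmap (deriv f) hf.2, max C 0, fun f hf => ?_⟩
    calc spNorm p (fun z => deriv f (φ z)) = spNorm p ((deriv f) ∘ φ) := rfl
      _ ≤ C * hpNorm p (deriv f) := hC (deriv f) hf.2
      _ ≤ max C 0 * hpNorm p (deriv f) :=
          mul_le_mul_of_nonneg_right (le_max_left _ _) (hpNorm_nonneg _ _)
      _ ≤ max C 0 * spNorm p f :=
          mul_le_mul_of_nonneg_left (hpNorm_le_spNorm p f) (le_max_right _ _)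
  have h23 : BddOp (MemHp p) (hpNorm p) (MemSp p) (spNorm p) (fun f => f ∘ φ) →
      BddOp (MemHp p) (hpNorm p) (MemHp p) (hpNorm p) (fun f => deriv (f ∘ φ)) := by
    rintro ⟨hmap, C, hC⟩
    refine ⟨fun g hg => (hmap g hg).2, max C 0, fun g hg => ?_⟩
    calc hpNorm p (deriv (g ∘ φ)) ≤ spNorm p (g ∘ φ) := hpNorm_le_spNorm p _
      _ ≤ C * hpNorm p g := hC g hg
      _ ≤ max C 0 * hpNorm p g :=
          mul_le_mul_of_nonneg_right (le_max_left _ _) (hpNorm_nonneg _ _)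
  have h32 : BddOp (MemHp p) (hpNorm p) (MemHp p) (hpNorm p) (fun f => deriv (f ∘ φ)) →
      BddOp (MemHp p) (hpNorm p) (MemSp p) (spNorm p) (fun f => f ∘ φ) := by
    rintro ⟨hmap, C, hC⟩
    obtain ⟨K, hK0, hK⟩ := point_eval p hp hφ0
    refine ⟨fun g hg => ⟨hg.1.comp hφan hφmap, hmap g hg⟩, K + max C 0, fun g hg => ?_⟩
    have h1 : ‖g (φ 0)‖ ≤ K * hpNorm p g := hK g hg
    have h2 : hpNorm p (deriv (g ∘ φ)) ≤ max C 0 * hpNorm p g :=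
      le_trans (hC g hg) (mul_le_mul_of_nonneg_right (le_max_left _ _) (hpNorm_nonneg _ _))
    calc spNorm p (g ∘ φ) = ‖g (φ 0)‖ + hpNorm p (deriv (g ∘ φ)) := rfl
      _ ≤ K * hpNorm p g + max C 0 * hpNorm p g := add_le_add h1 h2
      _ = (K + max C 0) * hpNorm p g := by ring
  exact ⟨⟨h12, h21⟩, ⟨fun h => h23 (h12 h), fun h => h21 (h32 h)⟩⟩
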